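/- arXiv:1912.09560 — 4 statements merged into one kernel-verified Lean document; each statement's English description precedes it below -/
import Mathlib

section
/- Gamma mixture representation: for all σ > 0, a > 0, b > 0 and y > 0, ∫_0^∞ [ √θ/(√(2π)·σ) · y^{-(1/(2σ)+1)} · exp(-(θ/2)·y^{-1/σ}) ] · [ b^a/Γ(a) · θ^{a-1} · exp(-bθ) ] dθ = (2b)^a / (σ·B(a,1/2)) · y^{-(1/(2σ)+1)} / (y^{-1/σ} + 2b)^{a+1/2}; that is, mixing the generalized log-Moyal density GlogM(θ,σ) over θ with a Gamma(a,b) density yields the GLMGA(σ,a,b) density. -/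
open MeasureTheory Real Filter Topology

/-- The (real) beta function `B(m,n) = ∫_0^1 t^(m-1) (1-t)^(n-1) dt`. -/
noncomputable def betaFn (m n : ℝ) : ℝ :=
  ∫ t in (0:ℝ)..1, t ^ (m - 1) * (1 - t) ^ (n - 1)

/-- The regularized incomplete beta function `I_{m,n}(v)`. -/
noncomputable def regIncBeta (m n v : ℝ) : ℝ :=
  (∫ t in (0:ℝ)..v, t ^ (m - 1) * (1 - t) ^ (n - 1)) / betaFn m n

/-- The GLMGA density `f_{σ,a,b}`. -/
noncomputable def glmga (σ a b y : ℝ) : ℝ :=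
  (2 * b) ^ a / (σ * betaFn a (1 / 2)) * y ^ (-(1 / (2 * σ) + 1))
    / (y ^ (-1 / σ) + 2 * b) ^ (a + 1 / 2)

/-- The real beta function in terms of the Gamma function. -/
lemma betaFn_eq_Gamma (m n : ℝ) (hm : 0 < m) (hn : 0 < n) :
    betaFn m n = Real.Gamma m * Real.Gamma n / Real.Gamma (m + n) := by
  have key : ((betaFn m n : ℝ) : ℂ) = Complex.betaIntegral m n := by
    rw [betaFn, Complex.betaIntegral, ← intervalIntegral.integral_ofReal]
    apply intervalIntegral.integral_congr
    intro x hx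
    rw [Set.uIcc_of_le (by norm_num : (0:ℝ) ≤ 1)] at hx
    show ((_ * _ : ℝ) : ℂ) = _
    rw [Complex.ofReal_mul, Complex.ofReal_cpow hx.1, Complex.ofReal_cpow (by linarith [hx.2])]
    push_cast
    ring
  have hG : Complex.Gamma (↑(m + n)) ≠ 0 := by
    rw [Complex.Gamma_ofReal]
    exact_mod_cast (Real.Gamma_pos_of_pos (by linarith)).ne'
  have h2 := Complex.Gamma_mul_Gamma_eq_betaIntegral
    (by simpa using hm : 0 < Complex.re m) (by simpa using hn : 0 < Complex.re n)
  rw [← Complex.ofReal_inj, key, Complex.ofReal_div, Complex.ofReal_mul,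
    ← Complex.Gamma_ofReal m, ← Complex.Gamma_ofReal n, ← Complex.Gamma_ofReal (m + n),
    eq_div_iff hG, Complex.ofReal_add, h2]
  ring

/-- gamma mixture representation of the GLMGA density. -/
theorem glmga_gamma_mixture (σ a b y : ℝ) (hσ : 0 < σ) (ha : 0 < a) (hb : 0 < b)
    (hy : 0 < y) :
    ∫ θ in Set.Ioi (0:ℝ),
      (Real.sqrt θ / (Real.sqrt (2 * π) * σ) * y ^ (-(1 / (2 * σ) + 1)) *
        Real.exp (-(θ / 2) * y ^ (-1 / σ))) *
      (b ^ a / Real.Gamma a * θ ^ (a - 1) * Real.exp (-(b * θ)))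
      = glmga σ a b y := by
  set u : ℝ := y ^ (-1 / σ) with hu_def
  set Y : ℝ := y ^ (-(1 / (2 * σ) + 1)) with hY_def
  have hu : 0 < u := Real.rpow_pos_of_pos hy _
  have hc : 0 < u / 2 + b := by linarith
  have hcong : ∀ θ ∈ Set.Ioi (0:ℝ),
      (Real.sqrt θ / (Real.sqrt (2 * π) * σ) * Y * Real.exp (-(θ / 2) * u)) *
        (b ^ a / Real.Gamma a * θ ^ (a - 1) * Real.exp (-(b * θ)))
      = (Y * b ^ a / (Real.sqrt (2 * π) * σ * Real.Gamma a)) *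
        (θ ^ (a + 1 / 2 - 1) * Real.exp (-((u / 2 + b) * θ))) := by
    intro θ hθ
    rw [Set.mem_Ioi] at hθ
    have h1 : Real.sqrt θ * θ ^ (a - 1) = θ ^ (a + 1 / 2 - 1) := by
      rw [Real.sqrt_eq_rpow, ← Real.rpow_add hθ]
      ring_nf
    have h2 : Real.exp (-(θ / 2) * u) * Real.exp (-(b * θ))
        = Real.exp (-((u / 2 + b) * θ)) := by
      rw [← Real.exp_add]; ring_nf
    calc (Real.sqrt θ / (Real.sqrt (2 * π) * σ) * Y * Real.exp (-(θ / 2) * u)) *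
        (b ^ a / Real.Gamma a * θ ^ (a - 1) * Real.exp (-(b * θ)))
        = (Y * b ^ a / (Real.sqrt (2 * π) * σ * Real.Gamma a)) *
          ((Real.sqrt θ * θ ^ (a - 1)) * (Real.exp (-(θ / 2) * u) * Real.exp (-(b * θ)))) := by
          ring
      _ = _ := by rw [h1, h2]
  rw [setIntegral_congr_fun measurableSet_Ioi hcong, MeasureTheory.integral_const_mul,
    integral_rpow_mul_exp_neg_mul_Ioi (by positivity) hc]
  -- algebra
  have hπ : (0:ℝ) < π := Real.pi_pos
  rw [glmga, betaFn_eq_Gamma a (1/2) ha (by norm_num), Real.Gamma_one_half_eq,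
    ← hu_def, ← hY_def]
  clear_value u Y
  clear hu_def hY_def hcong
  have h1c : 1 / (u / 2 + b) = 2 / (u + 2 * b) := by
    rw [div_eq_div_iff hc.ne' (by linarith)]; ring
  rw [h1c, Real.div_rpow (by norm_num) (by linarith),
    show (a + 1/2 : ℝ) = a + 1/2 from rfl,
    Real.rpow_add (by norm_num : (0:ℝ) < 2) a (1/2),
    ← Real.sqrt_eq_rpow 2,
    Real.mul_rpow (by norm_num : (0:ℝ) ≤ 2) hb.le,
    Real.sqrt_mul (by norm_num : (0:ℝ) ≤ 2) π]
  have hΓa : Real.Gamma a ≠ 0 := (Real.Gamma_pos_of_pos ha).ne'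
  have hΓa2 : Real.Gamma (a + 1/2) ≠ 0 := (Real.Gamma_pos_of_pos (by linarith)).ne'
  have hs2 : Real.sqrt 2 ≠ 0 := (Real.sqrt_pos.mpr (by norm_num)).ne'
  have hsπ : Real.sqrt π ≠ 0 := (Real.sqrt_pos.mpr hπ).ne'
  have hpow : (u + 2 * b) ^ (a + 1/2 : ℝ) ≠ 0 := (Real.rpow_pos_of_pos (by linarith) _).ne'
  field_simp
end

section
/- Cumulative distribution function of the GLMGA distribution: for all σ > 0, a > 0, b > 0 and y > 0, ∫_0^y f_{σ,a,b}(t) dt = 1 − I_{1/2,a}( y^{-1/σ} / (y^{-1/σ} + 2b) ), where I_{m,n}(v) is the regularized incomplete beta function. -/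
open MeasureTheory Real Filter Topology Set

lemma betaHalf_II {m n : ℝ} (hm : 0 < m) (hn : 0 < n) :
    IntervalIntegrable (fun t : ℝ => t ^ (m-1) * (1-t) ^ (n-1)) volume 0 (1/2) := by
  set C : ℝ := max 1 ((1/2 : ℝ) ^ (n-1)) with hC
  have hb : IntervalIntegrable (fun t : ℝ => C * t ^ (m-1)) volume 0 (1/2) :=
    (intervalIntegral.intervalIntegrable_rpow' (by linarith)).const_mul C
  rw [intervalIntegrable_iff, uIoc_of_le (by norm_num : (0:ℝ) ≤ 1/2)] at hb ⊢
  refine hb.mono' ?_ ?_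
  · have h1 : Measurable fun t : ℝ => t ^ (m-1) := by measurability
    have h2 : Measurable fun t : ℝ => (1-t) ^ (n-1) := by
      have : Measurable fun t : ℝ => (1:ℝ) - t := measurable_const.sub measurable_id
      measurability
    exact (h1.mul h2).aestronglyMeasurable
  · filter_upwards [ae_restrict_mem measurableSet_Ioc] with t ht
    have ht0 : 0 < t := ht.1
    have ht2 : t ≤ 1/2 := ht.2
    have h1 : (0:ℝ) ≤ t ^ (m-1) := rpow_nonneg ht0.le _
    have h2 : (0:ℝ) ≤ (1-t) ^ (n-1) := rpow_nonneg (by linarith) _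
    rw [Real.norm_eq_abs, abs_of_nonneg (mul_nonneg h1 h2), mul_comm C _]
    refine mul_le_mul_of_nonneg_left ?_ h1
    rcases le_or_gt 1 n with h | h
    · exact le_trans (Real.rpow_le_one (by linarith) (by linarith) (by linarith)) (le_max_left _ _)
    · exact le_trans (Real.rpow_le_rpow_of_nonpos (by norm_num) (by linarith) (by linarith))
        (le_max_right _ _)

lemma beta_II {m n : ℝ} (hm : 0 < m) (hn : 0 < n) :
    IntervalIntegrable (fun t : ℝ => t ^ (m-1) * (1-t) ^ (n-1)) volume 0 1 := by
  have h1 := betaHalf_II hm hn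
  have h2 := (betaHalf_II hn hm).comp_sub_left 1
  have he : (fun x : ℝ => (1-x) ^ (n-1) * (1-(1-x)) ^ (m-1))
      = fun x : ℝ => x ^ (m-1) * (1-x) ^ (n-1) := by
    funext x; rw [sub_sub_cancel, mul_comm]
  rw [show (1:ℝ) - 0 = 1 by norm_num, show (1:ℝ) - 1/2 = 1/2 by norm_num] at h2
  rw [he] at h2
  exact h1.trans h2.symm

lemma betaFn_pos {m n : ℝ} (hm : 0 < m) (hn : 0 < n) : 0 < betaFn m n := by
  refine intervalIntegral.intervalIntegral_pos_of_pos_on (beta_II hm hn) ?_ one_pos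
  intro x hx
  exact mul_pos (rpow_pos_of_pos hx.1 _) (rpow_pos_of_pos (by linarith [hx.2]) _)


lemma betaFn_symm (m n : ℝ) : betaFn m n = betaFn n m := by
  have h := intervalIntegral.integral_comp_sub_left
    (a := (0:ℝ)) (b := 1) (fun x : ℝ => x ^ (n-1) * (1-x) ^ (m-1)) 1
  simp only [sub_zero, sub_self] at h
  unfold betaFn
  rw [← h]
  apply intervalIntegral.integral_congr
  intro x _
  simp only [sub_sub_cancel]
  ring

lemma measurable_rpow_const' (c : ℝ) : Measurable fun t : ℝ => t ^ c := by measurability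

/-- cumulative distribution function of the GLMGA distribution. -/
theorem glmga_cdf (σ a b y : ℝ) (hσ : 0 < σ) (ha : 0 < a) (hb : 0 < b) (hy : 0 < y) :
    ∫ t in (0:ℝ)..y, glmga σ a b t
      = 1 - regIncBeta (1 / 2) a (y ^ (-1 / σ) / (y ^ (-1 / σ) + 2 * b)) := by
  have hB : 0 < betaFn (1/2) a := betaFn_pos (by norm_num) ha
  have hBsym : betaFn a (1/2) = betaFn (1/2) a := betaFn_symm _ _
  set B := betaFn (1/2) a with hBdef
  set g : ℝ → ℝ := fun s => s ^ ((1:ℝ)/2 - 1) * (1-s) ^ (a-1) with hgdef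
  have hg_II : IntervalIntegrable g volume 0 1 := beta_II (by norm_num) ha
  set u : ℝ → ℝ := fun t => t ^ (-1/σ) / (t ^ (-1/σ) + 2*b) with hudef
  set G : ℝ → ℝ := fun t => 1 - (∫ s in (0:ℝ)..u t, g s) / B with hGdef
  have hb2 : 0 < 2*b := by linarith
  have hs_pos : ∀ t : ℝ, 0 < t → 0 < t ^ (-1/σ) := fun t ht => rpow_pos_of_pos ht _
  have hd_pos : ∀ t : ℝ, 0 < t → 0 < t ^ (-1/σ) + 2*b :=
    fun t ht => add_pos (hs_pos t ht) hb2
  have hu_mem : ∀ t : ℝ, 0 < t → u t ∈ Ioo (0:ℝ) 1 := by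
    intro t ht
    refine ⟨div_pos (hs_pos t ht) (hd_pos t ht), ?_⟩
    rw [hudef, div_lt_one (hd_pos t ht)]
    linarith
  have hg_cont : ContinuousOn g (Ioo (0:ℝ) 1) := by
    apply ContinuousOn.mul
    · exact ContinuousOn.rpow_const continuousOn_id (fun x hx => Or.inl (ne_of_gt hx.1))
    · exact ContinuousOn.rpow_const (continuousOn_const.sub continuousOn_id)
        (fun x hx => Or.inl (by simpa using sub_ne_zero.mpr (ne_of_gt hx.2)))
  -- derivative of G
  have hderiv : ∀ t : ℝ, 0 < t → HasDerivAt G (glmga σ a b t) t := by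
    intro t ht
    have hs := hs_pos t ht
    have hd := hd_pos t ht
    have hum := hu_mem t ht
    have hrp : HasDerivAt (fun x : ℝ => x ^ (-1/σ)) ((-1/σ) * t ^ (-1/σ - 1)) t :=
      Real.hasDerivAt_rpow_const (Or.inl ht.ne')
    have hden : HasDerivAt (fun x : ℝ => x ^ (-1/σ) + 2*b) ((-1/σ) * t ^ (-1/σ - 1)) t :=
      hrp.add_const _
    have hu' : HasDerivAt u
        (((-1/σ) * t ^ (-1/σ - 1) * (t ^ (-1/σ) + 2*b)
          - t ^ (-1/σ) * ((-1/σ) * t ^ (-1/σ - 1))) / (t ^ (-1/σ) + 2*b)^2) t :=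
      hrp.div hden hd.ne'
    have hF : HasDerivAt (fun x => ∫ s in (0:ℝ)..x, g s) (g (u t)) (u t) := by
      apply intervalIntegral.integral_hasDerivAt_right
      · exact hg_II.mono_set (uIcc_subset_uIcc (by simp)
          (by rw [uIcc_of_le (zero_le_one)]; exact ⟨hum.1.le, hum.2.le⟩))
      · exact hg_cont.stronglyMeasurableAtFilter isOpen_Ioo _ hum
      · exact hg_cont.continuousAt (Ioo_mem_nhds hum.1 hum.2)
    have hGd := ((hF.comp t hu').div_const B).const_sub 1
    convert hGd using 1
    any_goals rfl
    -- key algebraic identity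
    have hnum : (-1/σ) * t ^ (-1/σ - 1) * (t ^ (-1/σ) + 2*b)
        - t ^ (-1/σ) * ((-1/σ) * t ^ (-1/σ - 1)) = (-1/σ) * t ^ (-1/σ - 1) * (2*b) := by ring
    have h1su : 1 - u t = 2*b / (t ^ (-1/σ) + 2*b) := by
      rw [hudef]; field_simp; ring
    have hdiv1 : (u t) ^ ((1:ℝ)/2 - 1)
        = (t ^ (-1/σ)) ^ ((1:ℝ)/2 - 1) / (t ^ (-1/σ) + 2*b) ^ ((1:ℝ)/2 - 1) :=
      Real.div_rpow hs.le hd.le _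
    have hdiv2 : (2*b / (t ^ (-1/σ) + 2*b)) ^ (a - 1)
        = (2*b) ^ (a-1) / (t ^ (-1/σ) + 2*b) ^ (a-1) := Real.div_rpow hb2.le hd.le _
    have hts : (t ^ (-1/σ)) ^ ((1:ℝ)/2 - 1) = t ^ ((-1/σ) * ((1:ℝ)/2 - 1)) :=
      (Real.rpow_mul ht.le _ _).symm
    have ht2 : t ^ ((-1/σ) * ((1:ℝ)/2 - 1)) * t ^ (-1/σ - 1) = t ^ (-(1/(2*σ)+1)) := by
      rw [← Real.rpow_add ht]; congr 1; field_simp; ring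
    have hd2 : (t ^ (-1/σ) + 2*b) ^ (a + 1/2)
        = (t ^ (-1/σ) + 2*b) ^ (a-1) * (t ^ (-1/σ) + 2*b) ^ ((1:ℝ)/2 - 1)
          * (t ^ (-1/σ) + 2*b) ^ (2:ℕ) := by
      rw [← Real.rpow_natCast (t ^ (-1/σ) + 2*b) 2, ← Real.rpow_add hd, ← Real.rpow_add hd]
      congr 1
      push_cast
      ring
    have hb2p : (2*b) ^ a = (2*b) ^ (a-1) * (2*b) := by
      have := Real.rpow_add_one hb2.ne' (a-1)
      rwa [sub_add_cancel] at this
    have hBne : B ≠ 0 := hB.ne'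
    have hd1ne : (t ^ (-1/σ) + 2*b) ^ ((1:ℝ)/2 - 1) ≠ 0 := (rpow_pos_of_pos hd _).ne'
    have hdane : (t ^ (-1/σ) + 2*b) ^ (a-1) ≠ 0 := (rpow_pos_of_pos hd _).ne'
    have htane : t ^ ((-1/σ) * ((1:ℝ)/2 - 1)) ≠ 0 := (rpow_pos_of_pos ht _).ne'
    rw [glmga, hBsym, hnum, hgdef]
    simp only []
    rw [h1su, hdiv1, hdiv2, hts, hb2p, hd2, ← ht2]
    field_simp
  -- integrability of glmga on (0,y]
  have hInt : IntervalIntegrable (glmga σ a b) volume 0 y := by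
    set C : ℝ := (2*b) ^ a / (σ * betaFn a (1/2)) with hCdef
    have hC : 0 ≤ C := by
      rw [hCdef, hBsym]
      positivity
    have hbound : IntervalIntegrable (fun t : ℝ => C * t ^ (a/σ - 1)) volume 0 y :=
      (intervalIntegral.intervalIntegrable_rpow' (by
        have : 0 < a / σ := div_pos ha hσ
        linarith)).const_mul C
    rw [intervalIntegrable_iff, uIoc_of_le hy.le] at hbound ⊢
    refine hbound.mono' ?_ ?_
    · have m1 : Measurable fun t : ℝ => t ^ (-(1/(2*σ)+1)) := measurable_rpow_const' _
      have m2 : Measurable fun t : ℝ => t ^ (-1/σ) + 2*b :=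
        (measurable_rpow_const' _).add measurable_const
      have m3 : Measurable fun t : ℝ => (t ^ (-1/σ) + 2*b) ^ (a+1/2) :=
        (measurable_rpow_const' (a+1/2)).comp m2
      have heq : glmga σ a b = fun t : ℝ =>
          (2*b) ^ a / (σ * betaFn a (1/2)) * t ^ (-(1/(2*σ)+1))
            / (t ^ (-1/σ) + 2*b) ^ (a+1/2) := rfl
      have : Measurable (glmga σ a b) := by
        rw [heq]
        exact (measurable_const.mul m1).div m3
      exact this.aestronglyMeasurable
    · filter_upwards [ae_restrict_mem measurableSet_Ioc] with t ht
      have ht0 : 0 < t := ht.1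
      have hs := hs_pos t ht0
      have hd := hd_pos t ht0
      have hnn : 0 ≤ glmga σ a b t := by
        rw [glmga, hBsym]
        positivity
      rw [Real.norm_eq_abs, abs_of_nonneg hnn, glmga, ← hCdef, mul_div_assoc]
      refine mul_le_mul_of_nonneg_left ?_ hC
      have hsd : (t ^ (-1/σ)) ^ (a + 1/2) ≤ (t ^ (-1/σ) + 2*b) ^ (a + 1/2) :=
        Real.rpow_le_rpow hs.le (by linarith) (by linarith)
      have hsq : 0 < (t ^ (-1/σ)) ^ (a + 1/2) := rpow_pos_of_pos hs _
      calc t ^ (-(1/(2*σ)+1)) / (t ^ (-1/σ) + 2*b) ^ (a + 1/2)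
          ≤ t ^ (-(1/(2*σ)+1)) / (t ^ (-1/σ)) ^ (a + 1/2) := by
            apply div_le_div_of_nonneg_left (rpow_nonneg ht0.le _) hsq hsd
        _ = t ^ (a/σ - 1) := by
            rw [← Real.rpow_mul ht0.le, ← Real.rpow_sub ht0]
            congr 1
            field_simp
            ring
  -- continuity of the beta primitive
  have hF_cont : ContinuousOn (fun x => ∫ s in (0:ℝ)..x, g s) (Icc (0:ℝ) 1) := by
    have := intervalIntegral.continuousOn_primitive_interval' hg_II
      (a := 0) (by simp [left_mem_uIcc])
    rwa [uIcc_of_le zero_le_one] at this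
  -- u tends to 1 as t → 0+
  have hu_tendsto : Tendsto u (𝓝[>] (0:ℝ)) (𝓝 1) := by
    have hc : ContinuousAt (fun t : ℝ => t ^ (1/σ)) 0 :=
      Real.continuousAt_rpow_const 0 (1/σ) (Or.inr (by positivity))
    have hden_ne : (1 : ℝ) + 2*b * (0:ℝ) ^ (1/σ) ≠ 0 := by
      rw [Real.zero_rpow (by positivity)]
      norm_num
    have haux : Tendsto (fun t : ℝ => 1 / (1 + 2*b * t ^ (1/σ))) (𝓝 0)
        (𝓝 (1 / (1 + 2*b * (0:ℝ) ^ (1/σ)))) :=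
      (continuousAt_const.div (continuousAt_const.add (continuousAt_const.mul hc)) hden_ne)
    rw [Real.zero_rpow (by positivity : (1:ℝ)/σ ≠ 0)] at haux
    norm_num at haux
    refine Tendsto.congr' ?_ (haux.mono_left nhdsWithin_le_nhds)
    filter_upwards [self_mem_nhdsWithin] with t (ht : t ∈ Ioi (0:ℝ))
    have ht0 : (0:ℝ) < t := ht
    have hx : 0 < t ^ (σ⁻¹ : ℝ) := rpow_pos_of_pos ht0 _
    have hsn : t ^ (-1/σ) = (t ^ (σ⁻¹ : ℝ))⁻¹ := by
      rw [neg_div, one_div, Real.rpow_neg ht0.le]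
    show (1 + 2*b * t ^ (σ⁻¹ : ℝ))⁻¹ = u t
    rw [hudef]
    simp only []
    rw [hsn]
    rw [eq_div_iff (by positivity)]
    field_simp
  have hu_within : Tendsto u (𝓝[>] (0:ℝ)) (𝓝[Icc (0:ℝ) 1] 1) := by
    refine tendsto_nhdsWithin_of_tendsto_nhds_of_eventually_within _ hu_tendsto ?_
    filter_upwards [self_mem_nhdsWithin] with t (ht : t ∈ Ioi (0:ℝ))
    exact Ioo_subset_Icc_self (hu_mem t ht)
  have hFu : Tendsto (fun t => ∫ s in (0:ℝ)..u t, g s) (𝓝[>] (0:ℝ)) (𝓝 B) := by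
    have h1 : ContinuousWithinAt (fun x => ∫ s in (0:ℝ)..x, g s) (Icc (0:ℝ) 1) 1 :=
      hF_cont 1 (by norm_num)
    have := h1.tendsto.comp hu_within
    exact this
  have hG0 : Tendsto G (𝓝[>] (0:ℝ)) (𝓝 0) := by
    have h2 : Tendsto G (𝓝[>] (0:ℝ)) (𝓝 (1 - B / B)) :=
      tendsto_const_nhds.sub (hFu.div_const B)
    simpa [div_self hB.ne'] using h2
  -- assembly
  have hmem : Ioc (0:ℝ) y ∈ 𝓝[>] (0:ℝ) := Ioc_mem_nhdsGT_of_mem ⟨le_refl 0, hy⟩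
  have hle : 𝓝[>] (0:ℝ) ≤ 𝓝[Icc (0:ℝ) y] (0:ℝ) :=
    nhdsWithin_le_of_mem (mem_of_superset hmem Ioc_subset_Icc_self)
  have t1 : Tendsto (fun ε => ∫ t in (0:ℝ)..ε, glmga σ a b t) (𝓝[>] (0:ℝ)) (𝓝 0) := by
    have hcont : ContinuousOn (fun x => ∫ t in (0:ℝ)..x, glmga σ a b t) (Icc (0:ℝ) y) := by
      have := intervalIntegral.continuousOn_primitive_interval' hInt
        (a := 0) (by simp [left_mem_uIcc])
      rwa [uIcc_of_le hy.le] at this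
    have h0 : ContinuousWithinAt (fun x => ∫ t in (0:ℝ)..x, glmga σ a b t) (Icc (0:ℝ) y) 0 :=
      hcont 0 (left_mem_Icc.mpr hy.le)
    have h1 := h0.tendsto.mono_left hle
    simpa using h1
  have t2 : Tendsto (fun ε => ∫ t in ε..y, glmga σ a b t) (𝓝[>] (0:ℝ))
      (𝓝 (∫ t in (0:ℝ)..y, glmga σ a b t)) := by
    have hev : ∀ᶠ ε in 𝓝[>] (0:ℝ),
        (∫ t in (0:ℝ)..y, glmga σ a b t) - (∫ t in (0:ℝ)..ε, glmga σ a b t)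
          = ∫ t in ε..y, glmga σ a b t := by
      filter_upwards [hmem] with ε hε
      exact intervalIntegral.integral_interval_sub_left hInt
        (hInt.mono_set (uIcc_subset_uIcc (by simp [left_mem_uIcc])
          (by rw [uIcc_of_le hy.le]; exact ⟨hε.1.le, hε.2⟩)))
    have := Tendsto.congr' hev (tendsto_const_nhds.sub t1)
    simpa using this
  have t3 : ∀ᶠ ε in 𝓝[>] (0:ℝ), (∫ t in ε..y, glmga σ a b t) = G y - G ε := by
    filter_upwards [hmem] with ε hε
    refine intervalIntegral.integral_eq_sub_of_hasDerivAt ?_ (hInt.mono_set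
      (uIcc_subset_uIcc (by rw [uIcc_of_le hy.le]; exact ⟨hε.1.le, hε.2⟩) (by simp [right_mem_uIcc])))
    intro x hx
    rw [uIcc_of_le hε.2] at hx
    exact hderiv x (lt_of_lt_of_le hε.1 hx.1)
  have t4 : Tendsto (fun ε => G y - G ε) (𝓝[>] (0:ℝ)) (𝓝 (G y)) := by
    have h4 : Tendsto (fun ε => G y - G ε) (𝓝[>] (0:ℝ)) (𝓝 (G y - 0)) :=
      Tendsto.sub tendsto_const_nhds hG0
    simpa using h4
  have t5 : Tendsto (fun ε => ∫ t in ε..y, glmga σ a b t) (𝓝[>] (0:ℝ)) (𝓝 (G y)) :=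
    Tendsto.congr' (t3.mono fun ε h => h.symm) t4
  have hfinal : (∫ t in (0:ℝ)..y, glmga σ a b t) = G y := tendsto_nhds_unique t2 t5
  rw [hfinal, hGdef]
  simp only [regIncBeta, hudef]
  rfl
end

section
/- Unimodality and mode of the GLMGA distribution: for all σ > 0, b > 0 and a > σ, the GLMGA density f_{σ,a,b} attains a strict global maximum on (0,∞) at the point y_0 = ( (b + 2bσ)/(a − σ) )^{-σ}; that is, f_{σ,a,b}(y) < f_{σ,a,b}(y_0) for every y > 0 with y ≠ y_0. -/
open MeasureTheory Real Filter Topology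

lemma betaFn_half_pos {a : ℝ} (ha : 0 < a) : 0 < betaFn a (1/2) := by
  unfold betaFn
  have h1 : IntervalIntegrable (fun t : ℝ => t ^ (a-1) * (1-t) ^ ((1:ℝ)/2-1))
      volume 0 (1/2) := by
    apply (intervalIntegral.intervalIntegrable_rpow' (by linarith : (-1:ℝ) < a - 1)).mul_continuousOn
    apply ContinuousOn.rpow_const (continuousOn_const.sub continuousOn_id)
    intro x hx
    rw [Set.uIcc_of_le (by norm_num : (0:ℝ) ≤ 1/2)] at hx
    exact Or.inl (ne_of_gt (by show (0:ℝ) < 1 - x; linarith [hx.2]))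
  have h2 : IntervalIntegrable (fun t : ℝ => t ^ (a-1) * (1-t) ^ ((1:ℝ)/2-1))
      volume (1/2) 1 := by
    have base : IntervalIntegrable (fun t : ℝ => t ^ ((1:ℝ)/2-1)) volume 0 (1/2) :=
      intervalIntegral.intervalIntegrable_rpow' (by norm_num)
    have comp := (base.comp_sub_left 1).symm
    rw [show (1:ℝ) - 1/2 = 1/2 by norm_num, sub_zero] at comp
    apply IntervalIntegrable.continuousOn_mul comp
    apply ContinuousOn.rpow_const continuousOn_id
    intro x hx
    rw [Set.uIcc_of_le (by norm_num : (1:ℝ)/2 ≤ 1)] at hx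
    exact Or.inl (ne_of_gt (by simp only [id_eq]; linarith [hx.1]))
  apply intervalIntegral.intervalIntegral_pos_of_pos_on (h1.trans h2) _ (by norm_num)
  intro x hx
  exact mul_pos (Real.rpow_pos_of_pos hx.1 _) (Real.rpow_pos_of_pos (by linarith [hx.2]) _)

/-- The log of `u^p/(u+c)^q`. -/
noncomputable def phiAux (p q c u : ℝ) : ℝ := p * Real.log u - q * Real.log (u + c)

lemma phiAux_hasDerivAt {p q c u : ℝ} (hc : 0 < c) (hu : 0 < u) :
    HasDerivAt (phiAux p q c) ((p * c - (q - p) * u) / (u * (u + c))) u := by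
  have h1 : HasDerivAt Real.log (1/u) u := by
    simpa [one_div] using Real.hasDerivAt_log (ne_of_gt hu)
  have h2 : HasDerivAt (fun u : ℝ => Real.log (u + c)) (1/(u+c)) u := by
    have huc : (0:ℝ) < u + c := by linarith
    have := (Real.hasDerivAt_log (ne_of_gt huc)).comp u ((hasDerivAt_id u).add_const c)
    simpa [one_div, Function.comp_def] using this
  have h := (h1.const_mul p).sub (h2.const_mul q)
  refine h.congr_deriv ?_
  have huc : (0:ℝ) < u + c := by linarith
  field_simp
  ring

lemma phiAux_lt {p q c m : ℝ} (hp : 0 < p) (hc : 0 < c) (hqp : p < q)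
    (hm : m = p * c / (q - p)) :
    ∀ u : ℝ, 0 < u → u ≠ m → phiAux p q c u < phiAux p q c m := by
  have hqp' : 0 < q - p := by linarith
  have hmpos : 0 < m := by rw [hm]; positivity
  have hmc : p * c - (q - p) * m = 0 := by
    rw [hm]; field_simp; ring
  have hcont : ContinuousOn (phiAux p q c) (Set.Ioi 0) := fun u hu =>
    ((phiAux_hasDerivAt hc hu).differentiableAt.continuousAt).continuousWithinAt
  have hmono : StrictMonoOn (phiAux p q c) (Set.Ioc 0 m) := by
    apply strictMonoOn_of_deriv_pos (convex_Ioc 0 m)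
      (hcont.mono Set.Ioc_subset_Ioi_self)
    intro x hx
    rw [interior_Ioc] at hx
    rw [(phiAux_hasDerivAt hc hx.1).deriv]
    apply div_pos
    · nlinarith [hmc, mul_pos hqp' (sub_pos.mpr hx.2)]
    · exact mul_pos hx.1 (by linarith [hx.1])
  have hanti : StrictAntiOn (phiAux p q c) (Set.Ici m) := by
    apply strictAntiOn_of_deriv_neg (convex_Ici m)
      (hcont.mono (fun x hx => lt_of_lt_of_le hmpos hx))
    intro x hx
    rw [interior_Ici] at hx
    have hx0 : 0 < x := lt_trans hmpos hx
    rw [(phiAux_hasDerivAt hc hx0).deriv]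
    have hxm : m < x := hx
    apply div_neg_of_neg_of_pos
    · nlinarith [hmc, mul_pos hqp' (sub_pos.mpr hxm)]
    · exact mul_pos hx0 (by linarith)
  intro u hu hune
  rcases lt_or_gt_of_ne hune with h | h
  · exact hmono ⟨hu, h.le⟩ ⟨hmpos, le_refl m⟩ h
  · exact hanti (Set.self_mem_Ici) (Set.mem_Ici.mpr h.le) h

lemma rpow_div_eq_exp_phiAux {p q c u : ℝ} (hc : 0 < c) (hu : 0 < u) :
    u ^ p / (u + c) ^ q = Real.exp (phiAux p q c u) := by
  have huc : (0:ℝ) < u + c := by linarith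
  rw [Real.rpow_def_of_pos hu, Real.rpow_def_of_pos huc, ← Real.exp_sub, phiAux]
  ring_nf

/-- unimodality and mode of the GLMGA distribution. -/
theorem glmga_mode (σ a b : ℝ) (hσ : 0 < σ) (hb : 0 < b) (ha : σ < a) :
    ∀ y : ℝ, 0 < y → y ≠ ((b + 2 * b * σ) / (a - σ)) ^ (-σ) →
      glmga σ a b y < glmga σ a b (((b + 2 * b * σ) / (a - σ)) ^ (-σ)) := by
  intro y hy hne
  have hσ' : σ ≠ 0 := ne_of_gt hσ
  set p : ℝ := σ + 1/2 with hp
  set q : ℝ := a + 1/2 with hq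
  set c : ℝ := 2 * b with hc
  set m : ℝ := (b + 2 * b * σ) / (a - σ) with hm
  have hcpos : 0 < c := by rw [hc]; positivity
  have hmpos : 0 < m := by
    rw [hm]; apply div_pos (by nlinarith) (by linarith)
  have hK : 0 < (2*b) ^ a / (σ * betaFn a (1/2)) :=
    div_pos (Real.rpow_pos_of_pos (by linarith) a)
      (mul_pos hσ (betaFn_half_pos (lt_trans hσ ha)))
  -- representation of glmga
  have hrepr : ∀ z : ℝ, 0 < z →
      glmga σ a b z = (2*b) ^ a / (σ * betaFn a (1/2)) * Real.exp (phiAux p q c (z ^ (-1/σ))) := by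
    intro z hz
    have huz : 0 < z ^ (-1/σ) := Real.rpow_pos_of_pos hz _
    have e1 : z ^ (-(1 / (2*σ) + 1)) = (z ^ (-1/σ)) ^ p := by
      rw [← Real.rpow_mul hz.le]
      congr 1
      field_simp
      ring
    unfold glmga
    rw [e1, mul_div_assoc, ← hc, ← hq, rpow_div_eq_exp_phiAux hcpos huz]
  -- the mode in u-coordinates
  have hymode : (((b + 2 * b * σ) / (a - σ)) ^ (-σ) : ℝ) = m ^ (-σ) := by rw [hm]
  have hy0pos : (0:ℝ) < m ^ (-σ) := Real.rpow_pos_of_pos hmpos _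
  have hum : (m ^ (-σ) : ℝ) ^ (-1/σ) = m := by
    rw [← Real.rpow_mul hmpos.le]
    have : (-σ) * (-1/σ) = 1 := by field_simp
    rw [this, Real.rpow_one]
  have hu : 0 < y ^ (-1/σ) := Real.rpow_pos_of_pos hy _
  have hune : y ^ (-1/σ) ≠ m := by
    intro h
    apply hne
    have : (y ^ (-1/σ)) ^ (-σ) = y := by
      rw [← Real.rpow_mul hy.le]
      have : (-1/σ) * (-σ) = 1 := by field_simp
      rw [this, Real.rpow_one]
    rw [hymode, ← h, this]
  have hkey := phiAux_lt (p := p) (q := q) (c := c) (m := m)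
    (by rw [hp]; linarith) hcpos (by rw [hp, hq]; linarith)
    (by rw [hm, hp, hq, hc]; congr 1 <;> ring)
    (y ^ (-1/σ)) hu hune
  rw [hymode, hrepr y hy, hrepr (m ^ (-σ)) hy0pos, hum]
  exact mul_lt_mul_of_pos_left (Real.exp_lt_exp.mpr hkey) hK
end

section
/- First-order Pareto-type tail behaviour of the GLMGA distribution: for all σ, a, b > 0, letting F̄(y) = ∫_y^∞ f_{σ,a,b}(t) dt denote the survival function, one has lim_{y→∞} y^{1/(2σ)} · F̄(y) = 2 / ( (2b)^{1/2} · B(a, 1/2) ). In particular the GLMGA distribution is regularly varying at infinity with extreme value index 2σ. -/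
open MeasureTheory Real Filter Topology

/-- first-order Pareto-type tail behaviour of the GLMGA distribution. -/
theorem glmga_tail_first_order (σ a b : ℝ) (hσ : 0 < σ) (ha : 0 < a) (hb : 0 < b) :
    Tendsto (fun y : ℝ => y ^ (1 / (2 * σ)) * ∫ t in Set.Ioi y, glmga σ a b t)
      atTop (𝓝 (2 / ((2 * b) ^ ((1:ℝ) / 2) * betaFn a (1 / 2)))) := by
  have h2b : (0:ℝ) < 2 * b := by linarith
  set B : ℝ := betaFn a (1 / 2) with hB
  set p : ℝ := 1 / (2 * σ) with hp
  have hp0 : 0 < p := by positivity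
  set q : ℝ := a + 1 / 2 with hq
  have hq0 : 0 < q := by positivity
  set C : ℝ := (2 * b) ^ a / (σ * B) with hC
  set g : ℝ → ℝ := fun t => t ^ (-(p + 1)) * (t ^ (-1 / σ) + 2 * b) ^ (-q) with hg
  have hbase : ∀ t : ℝ, 0 < t → (0:ℝ) < t ^ (-1 / σ) + 2 * b := by
    intro t ht; positivity
  have hpt : ∀ t : ℝ, 0 < t → glmga σ a b t = C * g t := by
    intro t ht
    simp only [glmga, hg, hC, hB, hp, hq]
    rw [Real.rpow_neg (hbase t ht).le]
    ring
  have hexp : -(p + 1) < -1 := by linarith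
  have hgpos : ∀ t : ℝ, 0 < t → 0 < g t := by
    intro t ht
    exact mul_pos (Real.rpow_pos_of_pos ht _) (Real.rpow_pos_of_pos (hbase t ht) _)
  have hmeas : ∀ y : ℝ, 0 < y → ContinuousOn g (Set.Ioi y) := by
    intro y hy
    have h1 : ContinuousOn (fun t : ℝ => t ^ (-(p + 1))) (Set.Ioi y) :=
      continuousOn_id.rpow_const fun t ht => Or.inl (ne_of_gt (hy.trans ht))
    have h2 : ContinuousOn (fun t : ℝ => (t ^ (-1 / σ) + 2 * b) ^ (-q)) (Set.Ioi y) := by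
      refine ContinuousOn.rpow_const ?_ fun t ht => Or.inl (ne_of_gt (hbase t (hy.trans ht)))
      exact (continuousOn_id.rpow_const fun t ht =>
        Or.inl (ne_of_gt (hy.trans ht))).add continuousOn_const
    exact h1.mul h2
  -- pointwise bounds on the second factor
  have hub : ∀ y : ℝ, 0 < y → ∀ t ∈ Set.Ioi y,
      g t ≤ t ^ (-(p + 1)) * (2 * b) ^ (-q) := by
    intro y hy t ht
    have ht0 : 0 < t := hy.trans ht
    refine mul_le_mul_of_nonneg_left ?_ (Real.rpow_nonneg ht0.le _)
    exact Real.rpow_le_rpow_of_nonpos h2b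
      (le_add_of_nonneg_left (Real.rpow_nonneg ht0.le _)) (by linarith)
  have hlb : ∀ y : ℝ, 0 < y → ∀ t ∈ Set.Ioi y,
      t ^ (-(p + 1)) * (y ^ (-1 / σ) + 2 * b) ^ (-q) ≤ g t := by
    intro y hy t ht
    have ht0 : 0 < t := hy.trans ht
    refine mul_le_mul_of_nonneg_left ?_ (Real.rpow_nonneg ht0.le _)
    refine Real.rpow_le_rpow_of_nonpos (hbase t ht0) ?_ (by linarith)
    have : t ^ (-1 / σ) ≤ y ^ (-1 / σ) :=
      Real.rpow_le_rpow_of_nonpos hy (le_of_lt ht)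
        (by rw [neg_div]; exact neg_nonpos.mpr (by positivity))
    linarith
  have hintpow : ∀ y : ℝ, 0 < y →
      IntegrableOn (fun t : ℝ => t ^ (-(p + 1))) (Set.Ioi y) :=
    fun y hy => integrableOn_Ioi_rpow_of_lt hexp hy
  have hint : ∀ y : ℝ, 0 < y → IntegrableOn g (Set.Ioi y) := by
    intro y hy
    have hb1 : IntegrableOn (fun t : ℝ => t ^ (-(p + 1)) * (2 * b) ^ (-q)) (Set.Ioi y) :=
      (hintpow y hy).mul_const _
    refine hb1.mono' ((hmeas y hy).aestronglyMeasurable measurableSet_Ioi) ?_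
    filter_upwards [ae_restrict_mem measurableSet_Ioi] with t ht
    have ht0 : 0 < t := hy.trans ht
    rw [Real.norm_eq_abs, abs_of_pos (hgpos t ht0)]
    exact hub y hy t ht
  have hIy : ∀ y : ℝ, 0 < y →
      ∫ t in Set.Ioi y, t ^ (-(p + 1)) = y ^ (-p) / p := by
    intro y hy
    rw [integral_Ioi_rpow_of_lt hexp hy]
    have h1 : -(p + 1) + 1 = -p := by ring
    rw [h1, neg_div_neg_eq]
  -- the squeeze on h y := y^p * ∫ g
  have key : Tendsto (fun y : ℝ => y ^ p * ∫ t in Set.Ioi y, g t) atTop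
      (𝓝 ((2 * b) ^ (-q) / p)) := by
    have hlow : Tendsto (fun y : ℝ => (y ^ (-1 / σ) + 2 * b) ^ (-q) / p) atTop
        (𝓝 ((2 * b) ^ (-q) / p)) := by
      have h1 : Tendsto (fun y : ℝ => y ^ (-1 / σ) + 2 * b) atTop (𝓝 (0 + 2 * b)) := by
        refine Tendsto.add_const _ ?_
        have := tendsto_rpow_neg_atTop (y := 1 / σ) (by positivity)
        simpa [neg_div] using this
      rw [zero_add] at h1
      have h2 : ContinuousAt (fun x : ℝ => x ^ (-q)) (2 * b) :=
        Real.continuousAt_rpow_const _ _ (Or.inl h2b.ne')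
      exact (h2.tendsto.comp h1).div_const p
    refine tendsto_of_tendsto_of_tendsto_of_le_of_le' hlow tendsto_const_nhds ?_ ?_
    · filter_upwards [eventually_gt_atTop (0:ℝ)] with y hy
      have h1 : (y ^ (-1 / σ) + 2 * b) ^ (-q) * (y ^ (-p) / p)
          ≤ ∫ t in Set.Ioi y, g t := by
        have := setIntegral_mono_on
          (((hintpow y hy).mul_const ((y ^ (-1 / σ) + 2 * b) ^ (-q))))
          (hint y hy) measurableSet_Ioi (hlb y hy)
        rw [MeasureTheory.integral_mul_const, hIy y hy] at this
        linarith [this]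
      have hyp : 0 < y ^ p := Real.rpow_pos_of_pos hy _
      have h2 : y ^ p * (y ^ (-p) / p) = 1 / p := by
        rw [← mul_div_assoc, ← Real.rpow_add hy]
        simp
      calc (y ^ (-1 / σ) + 2 * b) ^ (-q) / p
          = y ^ p * ((y ^ (-1 / σ) + 2 * b) ^ (-q) * (y ^ (-p) / p)) := by
            rw [← mul_assoc, mul_comm (y ^ p), mul_assoc, h2]; ring
        _ ≤ y ^ p * ∫ t in Set.Ioi y, g t := by
            exact mul_le_mul_of_nonneg_left h1 hyp.le
    · filter_upwards [eventually_gt_atTop (0:ℝ)] with y hy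
      have h1 : (∫ t in Set.Ioi y, g t) ≤ (2 * b) ^ (-q) * (y ^ (-p) / p) := by
        have := setIntegral_mono_on (hint y hy)
          ((hintpow y hy).mul_const ((2 * b) ^ (-q)))
          measurableSet_Ioi (hub y hy)
        rw [MeasureTheory.integral_mul_const, hIy y hy] at this
        linarith [this]
      have hyp : 0 < y ^ p := Real.rpow_pos_of_pos hy _
      have h2 : y ^ p * (y ^ (-p) / p) = 1 / p := by
        rw [← mul_div_assoc, ← Real.rpow_add hy]
        simp
      calc y ^ p * ∫ t in Set.Ioi y, g t
          ≤ y ^ p * ((2 * b) ^ (-q) * (y ^ (-p) / p)) :=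
            mul_le_mul_of_nonneg_left h1 hyp.le
        _ = (2 * b) ^ (-q) / p := by
            rw [← mul_assoc, mul_comm (y ^ p), mul_assoc, h2]; ring
  -- assemble
  have hfinal : Tendsto (fun y : ℝ => C * (y ^ p * ∫ t in Set.Ioi y, g t)) atTop
      (𝓝 (C * ((2 * b) ^ (-q) / p))) := key.const_mul C
  have heq : (fun y : ℝ => y ^ (1 / (2 * σ)) * ∫ t in Set.Ioi y, glmga σ a b t)
      =ᶠ[atTop] fun y : ℝ => C * (y ^ p * ∫ t in Set.Ioi y, g t) := by
    filter_upwards [eventually_gt_atTop (0:ℝ)] with y hy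
    have h1 : ∫ t in Set.Ioi y, glmga σ a b t = ∫ t in Set.Ioi y, C * g t := by
      refine setIntegral_congr_fun measurableSet_Ioi ?_
      intro t ht
      exact hpt t (hy.trans ht)
    rw [h1, MeasureTheory.integral_const_mul, ← hp]
    ring
  have hconst : C * ((2 * b) ^ (-q) / p) = 2 / ((2 * b) ^ ((1:ℝ) / 2) * B) := by
    have hK : (2 * b) ^ a * (2 * b) ^ (-q) = ((2 * b) ^ ((1:ℝ) / 2))⁻¹ := by
      rw [← Real.rpow_add h2b]
      have : a + -q = -(1 / 2 : ℝ) := by rw [hq]; ring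
      rw [this, Real.rpow_neg h2b.le]
    have hKpos : (0:ℝ) < (2 * b) ^ ((1:ℝ) / 2) := Real.rpow_pos_of_pos h2b _
    by_cases hBz : B = 0
    · simp [hC, hBz]
    · rw [hC, hp, div_mul_div_comm, hK]
      field_simp
  rw [← hconst]
  exact hfinal.congr' heq.symm
end
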